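/- arXiv:2309.12607 — 2 statements merged into one kernel-verified Lean document; each statement's English description precedes it below -/
import Mathlib

section
/- For every α ∈ (0,1) there exist ε > 0 and n₀ such that for all n ≥ n₀ the following holds. If G is a graph on n vertices that is not α-extremal and has minimum degree at least (1/2 − ε)n, then for every pair of half-sets A and B one has e_G(A, B) ≥ (α/3) n², where e_G(A, B) denotes the number of edges of G with one endpoint in A and the other in B. -/
open Finset
open scoped Classical

namespace RobustDirac

/-- A Dirac graph: minimum degree at least `n/2`. -/
def IsDirac {n : ℕ} (G : SimpleGraph (Fin n)) : Prop :=
  ∀ v, (n : ℝ) / 2 ≤ ((G.neighborSet v).ncard : ℝ)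

/-- Number of edges of `G` with both endpoints in `A`. -/
noncomputable def eIn {V : Type*} (G : SimpleGraph V) (A : Set V) : ℕ :=
  {e ∈ G.edgeSet | ∀ v ∈ e, v ∈ A}.ncard

/-- Number of edges of `G` with one endpoint in `A` and the other in `B`. -/
noncomputable def eBetween {V : Type*} (G : SimpleGraph V) (A B : Set V) : ℕ :=
  {e ∈ G.edgeSet | ∃ u v, e = s(u, v) ∧ u ∈ A ∧ v ∈ B}.ncard

/-- A half-set of an `n`-element vertex set. -/
def IsHalfSet {n : ℕ} (A : Finset (Fin n)) : Prop :=
  ((n : ℝ) - 1) / 2 ≤ (A.card : ℝ) ∧ (A.card : ℝ) ≤ ((n : ℝ) + 1) / 2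

/-- `e_C(𝔾, A)`. -/
noncomputable def eColored {n : ℕ} (𝔾 : Fin n → SimpleGraph (Fin n))
    (C : Finset (Fin n)) (A : Finset (Fin n)) : ℕ :=
  ∑ i ∈ C, (eIn (𝔾 i) ↑A + eIn (𝔾 i) (↑A)ᶜ) + ∑ i ∈ Cᶜ, eBetween (𝔾 i) ↑A (↑A)ᶜ

/-- `r(𝔾)`: minimum of `e_C(𝔾, A)` over half-sets `A` and odd-size color sets `C`. -/
noncomputable def rFam {n : ℕ} (𝔾 : Fin n → SimpleGraph (Fin n)) : ℕ :=
  sInf {k | ∃ A C : Finset (Fin n), IsHalfSet A ∧ Odd C.card ∧ k = eColored 𝔾 C A}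

/-- An exceptional family. -/
def IsExceptional {n : ℕ} (𝔾 : Fin n → SimpleGraph (Fin n)) : Prop :=
  ∃ A C : Finset (Fin n), IsHalfSet A ∧ Odd C.card ∧
    (eColored 𝔾 C A : ℝ) ≤ 0.1 * (n : ℝ) ^ 2

/-- A Hamilton `𝔾`-transversal, identified with its set of colored edges. -/
def IsHamTransversal {n : ℕ} (𝔾 : Fin n → SimpleGraph (Fin n))
    (T : Finset (Sym2 (Fin n) × Fin n)) : Prop :=
  T.card = n ∧ T.image Prod.snd = Finset.univ ∧
    (∀ x ∈ T, x.1 ∈ (𝔾 x.2).edgeSet) ∧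
    ∃ (v : Fin n) (w : (⊤ : SimpleGraph (Fin n)).Walk v v),
      w.IsHamiltonianCycle ∧ w.edges.toFinset = T.image Prod.fst

/-- Probability of event `E` when each coordinate of `ι` is `true`
independently with probability `p`. -/
noncomputable def prEvent {ι : Type*} [Fintype ι] [DecidableEq ι] (p : ℝ)
    (E : (ι → Bool) → Prop) : ℝ :=
  ∑ f : ι → Bool, if E f then (∏ i, if f i then p else 1 - p) else 0

/-- A `q`-spread probability measure supported on the subsets of `Z` satisfying `P`. -/
def IsSpreadMeasure {Z : Type*} [Fintype Z] [DecidableEq Z] (q : ℝ)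
    (P : Finset Z → Prop) (μ : Finset Z → ℝ) : Prop :=
  (∀ T, 0 ≤ μ T) ∧ (∀ T, μ T ≠ 0 → P T) ∧ (∑ T : Finset Z, μ T = 1) ∧
    ∀ S : Finset Z, (∑ T ∈ Finset.univ.filter (fun T => S ⊆ T), μ T) ≤ q ^ S.card


/-- A graph on `[n]` is `α`-extremal if some half-set `A` satisfies
`min{e(A), e(A, Ā)} ≤ α n²`. -/
def GraphExtremal {n : ℕ} (α : ℝ) (G : SimpleGraph (Fin n)) : Prop :=
  ∃ A : Finset (Fin n), IsHalfSet A ∧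
    ((min (eIn G ↑A) (eBetween G ↑A (↑A)ᶜ) : ℕ) : ℝ) ≤ α * (n : ℝ) ^ 2

/-! ### Auxiliary machinery for Statement 8 -/

section Aux

set_option maxHeartbeats 1000000 in
private lemma endgame {α μ β σ' ρ δ : ℝ} (hα0 : 0 < α) (hα : α ≤ 1/6) (hδ : δ = α/50)
    (hσ : σ' = α - μ) (hμ0 : 0 ≤ μ) (hμ : μ ≤ α/3) (hβ0 : 0 ≤ β)
    (hρ0 : 0 ≤ ρ) (hρ : ρ^2 = 2*σ')
    (h1 : 2*σ' - δ ≤ β) (h2 : β ≤ 1/2 - ρ + δ)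
    (h3 : β*(1/2 - β) ≤ 2*μ + δ) (h4 : β*(1/2 - (3/2)*β) ≤ μ + δ) : False := by
  have hσ23 : 2*α/3 ≤ σ' := by linarith
  have hσα : σ' ≤ α := by linarith
  have hδ0 : 0 < δ := by rw [hδ]; linarith
  have hδ300 : δ ≤ 1/300 := by rw [hδ]; linarith
  rcases le_or_gt (0.069 : ℝ) σ' with hA | hB
  · -- Case A : interval empty
    have hρbig : (0.3714 : ℝ) ≤ ρ := by nlinarith [sq_nonneg (ρ - 0.3714), sq_nonneg (ρ + 0.3714)]
    linarith
  rcases le_or_gt β (1/6 : ℝ) with hBc | hC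
  · -- Case B
    nlinarith [mul_nonneg (by linarith : (0:ℝ) ≤ β - (2*σ' - δ))
        (by nlinarith : (0:ℝ) ≤ 1/2 - (3/2)*(β + (2*σ' - δ)))]
  rcases le_or_gt β (0.29 : ℝ) with hCc | hD
  · -- Case C : 1/6 < β ≤ 0.29
    have hμρ : 4*μ ≤ ρ^2 := by nlinarith
    have hρle : ρ ≤ 1/2 - β + δ := by linarith
    have e1 : ρ^2 ≤ (1/2 - β + δ)^2 := by
      have := pow_le_pow_left₀ hρ0 hρle 2
      linarith
    have e2 : 4*(β*(1/2 - (3/2)*β)) ≤ (1/2 - β + δ)^2 + 4*δ := by linarith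
    nlinarith [mul_nonneg (by linarith : (0:ℝ) ≤ β - 1/6) (by linarith : (0:ℝ) ≤ 0.29 - β),
      mul_nonneg hδ0.le hβ0, mul_nonneg hδ0.le (by linarith : (0:ℝ) ≤ 1/300 - δ)]
  · -- Case D : β > 0.29
    have hρup : ρ ≤ 0.2134 := by linarith
    have hρlb : 4*α/3 ≤ ρ^2 := by nlinarith
    have hρα : 6.2*α ≤ ρ := by nlinarith
    have hx : ρ - δ ≤ 1/2 - β := by linarith
    have hxpos : (0:ℝ) ≤ ρ - δ := by rw [hδ]; linarith
    have hmul : 0.29*(ρ - δ) ≤ β*(1/2 - β) :=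
      mul_le_mul (by linarith) hx hxpos hβ0
    linarith

private lemma endgame' {α M X S R N : ℝ} (hN : 0 < N) (hα0 : 0 < α) (hα : α ≤ 1/6)
    (hM0 : 0 ≤ M) (hM : M ≤ α/3*N^2) (hX0 : 0 ≤ X) (hS : S = α*N^2 - M)
    (hR0 : 0 ≤ R) (hR : R^2 = 2*S)
    (h1 : 2*S ≤ X*N + (α/50)*N^2)
    (h2 : X ≤ N/2 - R + (α/50)*N)
    (h3 : X*(N/2 - X) ≤ 2*M + (α/50)*N^2)
    (h4 : X*(N/2 - (3/2)*X) ≤ M + (α/50)*N^2) : False := by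
  have hN2 : (0:ℝ) < N^2 := by positivity
  apply endgame (α := α) (μ := M/N^2) (β := X/N) (σ' := α - M/N^2) (ρ := R/N) (δ := α/50)
    hα0 hα rfl rfl (by positivity) ?_ (by positivity) (by positivity) ?_ ?_ ?_ ?_ ?_
  · rw [div_le_iff₀ hN2]; linarith
  · rw [div_pow, div_eq_iff hN2.ne', hR, hS]
    field_simp [hN.ne']
    all_goals first | ring1 | (left; first | ring1 | trivial) | trivial
  · have e1 : 2*(α - M/N^2) - α/50 = (2*S - (α/50)*N^2)/N^2 := by
      rw [hS]
      field_simp [hN.ne']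
      all_goals first | ring1 | (left; first | ring1 | trivial) | trivial
    have e2 : X/N = (X*N)/N^2 := by
      rw [pow_two, mul_comm X N, ← div_div, mul_div_assoc, mul_div_cancel_left₀ _ hN.ne']
    rw [e1, e2]
    exact (div_le_div_iff_of_pos_right hN2).mpr (by linarith)
  · have e1 : (1:ℝ)/2 - R/N + α/50 = (N/2 - R + (α/50)*N)/N := by
      field_simp [hN.ne']
      all_goals first | ring1 | (left; first | ring1 | trivial) | trivial
    rw [e1]
    exact (div_le_div_iff_of_pos_right hN).mpr h2
  · have e1 : (X/N)*(1/2 - X/N) = (X*(N/2 - X))/N^2 := by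
      field_simp [hN.ne']
      all_goals first | ring1 | (left; first | ring1 | trivial) | trivial
    have e2 : 2*(M/N^2) + α/50 = (2*M + (α/50)*N^2)/N^2 := by
      field_simp [hN.ne']
      all_goals first | ring1 | (left; first | ring1 | trivial) | trivial
    rw [e1, e2]
    exact (div_le_div_iff_of_pos_right hN2).mpr h3
  · have e1 : (X/N)*(1/2 - (3/2)*(X/N)) = (X*(N/2 - (3/2)*X))/N^2 := by
      field_simp [hN.ne']
      all_goals first | ring1 | (left; first | ring1 | trivial) | trivial
    have e2 : M/N^2 + α/50 = (M + (α/50)*N^2)/N^2 := by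
      field_simp [hN.ne']
      all_goals first | ring1 | (left; first | ring1 | trivial) | trivial
    rw [e1, e2]
    exact (div_le_div_iff_of_pos_right hN2).mpr h4

variable {n : ℕ}

private noncomputable def EBf (G : SimpleGraph (Fin n)) (U W : Finset (Fin n)) :
    Finset (Sym2 (Fin n)) :=
  Finset.univ.filter (fun e => e ∈ G.edgeSet ∧ ∃ u v, e = s(u, v) ∧ u ∈ U ∧ v ∈ W)

private noncomputable def EIf (G : SimpleGraph (Fin n)) (U : Finset (Fin n)) :
    Finset (Sym2 (Fin n)) :=
  Finset.univ.filter (fun e => e ∈ G.edgeSet ∧ ∀ v ∈ e, v ∈ U)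

private noncomputable def PFf (G : SimpleGraph (Fin n)) (U W : Finset (Fin n)) :
    Finset (Fin n × Fin n) :=
  (U ×ˢ W).filter (fun p => G.Adj p.1 p.2)

private lemma mem_EBf {G : SimpleGraph (Fin n)} {U W : Finset (Fin n)} {e : Sym2 (Fin n)} :
    e ∈ EBf G U W ↔ e ∈ G.edgeSet ∧ ∃ u v, e = s(u, v) ∧ u ∈ U ∧ v ∈ W := by
  simp [EBf]

private lemma mem_EIf {G : SimpleGraph (Fin n)} {U : Finset (Fin n)} {e : Sym2 (Fin n)} :
    e ∈ EIf G U ↔ e ∈ G.edgeSet ∧ ∀ v ∈ e, v ∈ U := by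
  simp [EIf]

private lemma mem_PFf {G : SimpleGraph (Fin n)} {U W : Finset (Fin n)} {p : Fin n × Fin n} :
    p ∈ PFf G U W ↔ p.1 ∈ U ∧ p.2 ∈ W ∧ G.Adj p.1 p.2 := by
  simp [PFf, Finset.mem_product, and_assoc]

private lemma eBetween_eq_card (G : SimpleGraph (Fin n)) (U W : Finset (Fin n)) :
    eBetween G ↑U ↑W = (EBf G U W).card := by
  have h : {e ∈ G.edgeSet | ∃ u v, e = s(u, v) ∧ u ∈ (↑U : Set (Fin n)) ∧ v ∈ (↑W : Set (Fin n))}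
      = ↑(EBf G U W) := by
    ext e; simp [mem_EBf]
  rw [eBetween, h, Set.ncard_coe_finset]

private lemma eIn_eq_card (G : SimpleGraph (Fin n)) (U : Finset (Fin n)) :
    eIn G ↑U = (EIf G U).card := by
  have h : {e ∈ G.edgeSet | ∀ v ∈ e, v ∈ (↑U : Set (Fin n))} = ↑(EIf G U) := by
    ext e; simp [mem_EIf]
  rw [eIn, h, Set.ncard_coe_finset]

private lemma EBf_card_le (G : SimpleGraph (Fin n)) (U W : Finset (Fin n)) :
    (EBf G U W).card ≤ U.card * W.card := by
  calc (EBf G U W).card ≤ ((U ×ˢ W).image (fun p => s(p.1, p.2))).card := by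
        apply Finset.card_le_card
        intro e he
        rw [mem_EBf] at he
        obtain ⟨_, u, v, rfl, hu, hv⟩ := he
        exact Finset.mem_image.mpr ⟨(u, v), Finset.mem_product.mpr ⟨hu, hv⟩, rfl⟩
    _ ≤ (U ×ˢ W).card := Finset.card_image_le
    _ = U.card * W.card := Finset.card_product U W

private lemma PFf_card_le (G : SimpleGraph (Fin n)) (U W : Finset (Fin n)) :
    (PFf G U W).card ≤ U.card * W.card :=
  le_trans (Finset.card_le_card (Finset.filter_subset _ _)) (le_of_eq (Finset.card_product U W))

private lemma fiber_le_two (G : SimpleGraph (Fin n)) (U W : Finset (Fin n)) (e : Sym2 (Fin n)) :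
    ((PFf G U W).filter (fun p => s(p.1, p.2) = e)).card ≤ 2 := by
  induction e using Sym2.ind with
  | _ a b =>
    have hsub : (PFf G U W).filter (fun p => s(p.1, p.2) = s(a, b)) ⊆ {(a, b), (b, a)} := by
      intro p hp
      rw [Finset.mem_filter] at hp
      rcases Sym2.eq_iff.mp hp.2 with ⟨h1, h2⟩ | ⟨h1, h2⟩
      · simp [Prod.ext_iff, h1, h2]
      · simp [Prod.ext_iff, h1, h2]
    calc _ ≤ ({(a, b), (b, a)} : Finset (Fin n × Fin n)).card := Finset.card_le_card hsub
      _ ≤ 2 := Finset.card_insert_le _ _ |>.trans (by simp)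

private lemma PFf_le_two_EIf (G : SimpleGraph (Fin n)) (U : Finset (Fin n)) :
    (PFf G U U).card ≤ 2 * (EIf G U).card := by
  have hmaps : ∀ p ∈ PFf G U U, s(p.1, p.2) ∈ EIf G U := by
    intro p hp
    rw [mem_PFf] at hp
    refine mem_EIf.mpr ⟨hp.2.2, fun v hv => ?_⟩
    rcases Sym2.mem_iff.mp hv with h | h
    · exact h ▸ hp.1
    · exact h ▸ hp.2.1
  exact Finset.card_le_mul_card_image_of_maps_to hmaps 2
    (fun e _ => fiber_le_two G U U e)

private lemma PFf_le_EBf (G : SimpleGraph (Fin n)) {U W : Finset (Fin n)} (h : Disjoint U W) :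
    (PFf G U W).card ≤ (EBf G U W).card := by
  apply Finset.card_le_card_of_injOn (fun p => s(p.1, p.2))
  · intro p hp
    rw [Finset.mem_coe, mem_PFf] at hp
    exact mem_EBf.mpr ⟨hp.2.2, p.1, p.2, rfl, hp.1, hp.2.1⟩
  · intro p hp q hq hpq
    simp only [Finset.mem_coe, mem_PFf] at hp hq
    rcases Sym2.eq_iff.mp hpq with ⟨h1, h2⟩ | ⟨h1, h2⟩
    · exact Prod.ext h1 h2
    · exact absurd hq.2.1 (Finset.disjoint_left.mp h (h1 ▸ hp.1))

private lemma sym2_mk_inf_sup (e : Sym2 (Fin n)) : s(e.inf, e.sup) = e := by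
  induction e using Sym2.ind with
  | _ a b =>
    rcases le_total a b with h | h
    · rw [Sym2.inf_mk, Sym2.sup_mk, inf_eq_left.mpr h, sup_eq_right.mpr h]
    · rw [Sym2.inf_mk, Sym2.sup_mk, inf_eq_right.mpr h, sup_eq_left.mpr h, Sym2.eq_swap]

private lemma inf_mem' (e : Sym2 (Fin n)) : e.inf ∈ e := by
  induction e using Sym2.ind with
  | _ a b =>
    rcases le_total a b with h | h
    · simp [Sym2.inf_mk, inf_eq_left.mpr h]
    · simp [Sym2.inf_mk, inf_eq_right.mpr h]

private lemma sup_mem' (e : Sym2 (Fin n)) : e.sup ∈ e := by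
  induction e using Sym2.ind with
  | _ a b =>
    rcases le_total a b with h | h
    · simp [Sym2.sup_mk, sup_eq_right.mpr h]
    · simp [Sym2.sup_mk, sup_eq_left.mpr h]

private lemma two_EIf_le (G : SimpleGraph (Fin n)) (U : Finset (Fin n)) :
    2 * (EIf G U).card + U.card ≤ U.card * U.card := by
  classical
  set F1 : Finset (Fin n × Fin n) := U.offDiag.filter (fun p => p.1 < p.2) with hF1
  set F2 : Finset (Fin n × Fin n) := U.offDiag.filter (fun p => p.2 < p.1) with hF2
  have hlt : ∀ e ∈ EIf G U, e.inf < e.sup := by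
    intro e he
    rw [mem_EIf] at he
    have hne : ¬ e.IsDiag := G.not_isDiag_of_mem_edgeSet he.1
    have hle := Sym2.inf_le_sup e
    rcases lt_or_eq_of_le hle with h | h
    · exact h
    · exfalso; apply hne
      rw [← sym2_mk_inf_sup e, h]
      exact Sym2.isDiag_iff_proj_eq |>.mpr rfl
  have hmem : ∀ e ∈ EIf G U, e.inf ∈ U ∧ e.sup ∈ U := by
    intro e he
    have h := (mem_EIf.mp he).2
    exact ⟨h _ (inf_mem' e), h _ (sup_mem' e)⟩
  have hc1 : (EIf G U).card ≤ F1.card := by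
    apply Finset.card_le_card_of_injOn (fun e => (e.inf, e.sup))
    · intro e he
      rw [hF1, Finset.mem_coe, Finset.mem_filter, Finset.mem_offDiag]
      exact ⟨⟨(hmem e he).1, (hmem e he).2, (hlt e he).ne⟩, hlt e he⟩
    · intro e he f hf hef
      simp only [Prod.mk.injEq] at hef
      obtain ⟨h1, h2⟩ := hef
      rw [← sym2_mk_inf_sup e, ← sym2_mk_inf_sup f, h1, h2]
  have hc2 : (EIf G U).card ≤ F2.card := by
    apply Finset.card_le_card_of_injOn (fun e => (e.sup, e.inf))
    · intro e he
      rw [hF2, Finset.mem_coe, Finset.mem_filter, Finset.mem_offDiag]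
      exact ⟨⟨(hmem e he).2, (hmem e he).1, (hlt e he).ne'⟩, hlt e he⟩
    · intro e he f hf hef
      simp only [Prod.mk.injEq] at hef
      obtain ⟨h1, h2⟩ := hef
      rw [← sym2_mk_inf_sup e, ← sym2_mk_inf_sup f, h2, h1, Sym2.eq_swap]
  have hdisj : Disjoint F1 F2 := by
    rw [Finset.disjoint_left]
    intro p hp1 hp2
    rw [hF1, Finset.mem_filter] at hp1
    rw [hF2, Finset.mem_filter] at hp2
    exact absurd hp2.2 (not_lt.mpr hp1.2.le)
  have hsub : F1 ∪ F2 ⊆ U.offDiag :=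
    Finset.union_subset (Finset.filter_subset _ _) (Finset.filter_subset _ _)
  have hkey : 2 * (EIf G U).card ≤ U.offDiag.card := by
    calc 2 * (EIf G U).card = (EIf G U).card + (EIf G U).card := two_mul _
      _ ≤ F1.card + F2.card := Nat.add_le_add hc1 hc2
      _ = (F1 ∪ F2).card := (Finset.card_union_of_disjoint hdisj).symm
      _ ≤ U.offDiag.card := Finset.card_le_card hsub
  rw [Finset.offDiag_card] at hkey
  have hle : U.card ≤ U.card * U.card := by
    rcases Nat.eq_zero_or_pos U.card with h | h
    · simp [h]
    · exact Nat.le_mul_of_pos_left _ h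
  omega

private lemma sum_deg_eq (G : SimpleGraph (Fin n)) (U : Finset (Fin n)) :
    ∑ v ∈ U, (G.neighborSet v).ncard = (PFf G U Finset.univ).card := by
  have hfib : ∀ p ∈ PFf G U Finset.univ, p.1 ∈ U := fun p hp => (mem_PFf.mp hp).1
  rw [Finset.card_eq_sum_card_fiberwise hfib]
  apply Finset.sum_congr rfl
  intro v hv
  have h1 : (G.neighborSet v).ncard = (Finset.univ.filter (fun w => G.Adj v w)).card := by
    have h : G.neighborSet v = ↑(Finset.univ.filter (fun w => G.Adj v w)) := by
      ext w; simp [SimpleGraph.mem_neighborSet]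
    rw [h, Set.ncard_coe_finset]
  rw [h1]
  symm
  refine Finset.card_bij' (fun p _ => p.2) (fun w _ => (v, w)) ?_ ?_ ?_ ?_
  · intro p hp
    rw [Finset.mem_filter] at hp ⊢
    exact ⟨Finset.mem_univ _, hp.2 ▸ (mem_PFf.mp hp.1).2.2⟩
  · intro w hw
    rw [Finset.mem_filter] at hw ⊢
    exact ⟨mem_PFf.mpr ⟨hv, Finset.mem_univ _, hw.2⟩, rfl⟩
  · intro p hp
    rw [Finset.mem_filter] at hp
    exact Prod.ext hp.2.symm rfl
  · intro w hw
    rfl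

private lemma PFf_union_right (G : SimpleGraph (Fin n)) (U : Finset (Fin n))
    {W₁ W₂ : Finset (Fin n)} (h : Disjoint W₁ W₂) :
    (PFf G U (W₁ ∪ W₂)).card = (PFf G U W₁).card + (PFf G U W₂).card := by
  have heq : PFf G U (W₁ ∪ W₂) = PFf G U W₁ ∪ PFf G U W₂ := by
    ext p
    simp only [Finset.mem_union, mem_PFf]
    tauto
  rw [heq]
  apply Finset.card_union_of_disjoint
  rw [Finset.disjoint_left]
  intro p hp1 hp2
  exact Finset.disjoint_left.mp h (mem_PFf.mp hp1).2.1 (mem_PFf.mp hp2).2.1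

private lemma L9 (G : SimpleGraph (Fin n)) (A B : Finset (Fin n)) :
    (EIf G (A ∩ B)).card + (EBf G (A ∩ B) (A \ B)).card + (EBf G (A ∩ B) (B \ A)).card
      ≤ (EBf G A B).card := by
  have hsub1 : EIf G (A ∩ B) ⊆ EBf G A B := by
    intro e he
    rw [mem_EIf] at he
    obtain ⟨hedge, hall⟩ := he
    induction e using Sym2.ind with
    | _ u v =>
      have hu := hall u (Sym2.mem_mk_left u v)
      have hv := hall v (Sym2.mem_mk_right u v)
      rw [Finset.mem_inter] at hu hv
      exact mem_EBf.mpr ⟨hedge, u, v, rfl, hu.1, hv.2⟩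
  have hsub2 : EBf G (A ∩ B) (A \ B) ⊆ EBf G A B := by
    intro e he
    rw [mem_EBf] at he
    obtain ⟨hedge, u, v, rfl, hu, hv⟩ := he
    rw [Finset.mem_inter] at hu
    rw [Finset.mem_sdiff] at hv
    exact mem_EBf.mpr ⟨hedge, v, u, Sym2.eq_swap, hv.1, hu.2⟩
  have hsub3 : EBf G (A ∩ B) (B \ A) ⊆ EBf G A B := by
    intro e he
    rw [mem_EBf] at he
    obtain ⟨hedge, u, v, rfl, hu, hv⟩ := he
    rw [Finset.mem_inter] at hu
    rw [Finset.mem_sdiff] at hv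
    exact mem_EBf.mpr ⟨hedge, u, v, rfl, hu.1, hv.1⟩
  have hd12 : Disjoint (EIf G (A ∩ B)) (EBf G (A ∩ B) (A \ B)) := by
    rw [Finset.disjoint_left]
    intro e he1 he2
    rw [mem_EIf] at he1
    rw [mem_EBf] at he2
    obtain ⟨_, u, v, rfl, hu, hv⟩ := he2
    have hm := he1.2 v (Sym2.mem_mk_right u v)
    rw [Finset.mem_inter] at hm
    rw [Finset.mem_sdiff] at hv
    exact hv.2 hm.2
  have hd13 : Disjoint (EIf G (A ∩ B)) (EBf G (A ∩ B) (B \ A)) := by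
    rw [Finset.disjoint_left]
    intro e he1 he2
    rw [mem_EIf] at he1
    rw [mem_EBf] at he2
    obtain ⟨_, u, v, rfl, hu, hv⟩ := he2
    have hm := he1.2 v (Sym2.mem_mk_right u v)
    rw [Finset.mem_inter] at hm
    rw [Finset.mem_sdiff] at hv
    exact hv.2 hm.1
  have hd23 : Disjoint (EBf G (A ∩ B) (A \ B)) (EBf G (A ∩ B) (B \ A)) := by
    rw [Finset.disjoint_left]
    intro e he1 he2
    rw [mem_EBf] at he1 he2
    obtain ⟨_, u, v, he, hu, hv⟩ := he1
    obtain ⟨_, u', v', he', hu', hv'⟩ := he2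
    rw [Finset.mem_inter] at hu hu'
    rw [Finset.mem_sdiff] at hv hv'
    rw [he] at he'
    rcases Sym2.eq_iff.mp he' with ⟨h1, h2⟩ | ⟨h1, h2⟩
    · exact hv'.2 (h2 ▸ hv.1)
    · exact hv'.2 (h1 ▸ hu.1)
  calc (EIf G (A ∩ B)).card + (EBf G (A ∩ B) (A \ B)).card + (EBf G (A ∩ B) (B \ A)).card
      = ((EIf G (A ∩ B)) ∪ (EBf G (A ∩ B) (A \ B))).card + (EBf G (A ∩ B) (B \ A)).card := by
        rw [Finset.card_union_of_disjoint hd12]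
    _ = ((EIf G (A ∩ B)) ∪ (EBf G (A ∩ B) (A \ B)) ∪ (EBf G (A ∩ B) (B \ A))).card := by
        rw [Finset.card_union_of_disjoint (Finset.disjoint_union_left.mpr ⟨hd13, hd23⟩)]
    _ ≤ (EBf G A B).card := Finset.card_le_card
        (Finset.union_subset (Finset.union_subset hsub1 hsub2) hsub3)

private lemma L10 (G : SimpleGraph (Fin n)) (A B : Finset (Fin n)) :
    (EIf G A).card
      ≤ (EIf G (A ∩ B)).card + (EBf G (A ∩ B) (A \ B)).card + (EIf G (A \ B)).card := by
  have hsub : EIf G A ⊆ (EIf G (A ∩ B)) ∪ (EBf G (A ∩ B) (A \ B)) ∪ (EIf G (A \ B)) := by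
    intro e he
    rw [mem_EIf] at he
    obtain ⟨hedge, hall⟩ := he
    induction e using Sym2.ind with
    | _ u v =>
      have hu := hall u (Sym2.mem_mk_left u v)
      have hv := hall v (Sym2.mem_mk_right u v)
      rw [Finset.mem_union, Finset.mem_union]
      by_cases hub : u ∈ B <;> by_cases hvb : v ∈ B
      · refine Or.inl (Or.inl (mem_EIf.mpr ⟨hedge, fun w hw => ?_⟩))
        rcases Sym2.mem_iff.mp hw with h | h
        · exact h ▸ Finset.mem_inter.mpr ⟨hu, hub⟩
        · exact h ▸ Finset.mem_inter.mpr ⟨hv, hvb⟩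
      · exact Or.inl (Or.inr (mem_EBf.mpr ⟨hedge, u, v, rfl,
          Finset.mem_inter.mpr ⟨hu, hub⟩, Finset.mem_sdiff.mpr ⟨hv, hvb⟩⟩))
      · exact Or.inl (Or.inr (mem_EBf.mpr ⟨hedge, v, u, Sym2.eq_swap,
          Finset.mem_inter.mpr ⟨hv, hvb⟩, Finset.mem_sdiff.mpr ⟨hu, hub⟩⟩))
      · refine Or.inr (mem_EIf.mpr ⟨hedge, fun w hw => ?_⟩)
        rcases Sym2.mem_iff.mp hw with h | h
        · exact h ▸ Finset.mem_sdiff.mpr ⟨hu, hub⟩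
        · exact h ▸ Finset.mem_sdiff.mpr ⟨hv, hvb⟩
  calc (EIf G A).card ≤ ((EIf G (A ∩ B)) ∪ (EBf G (A ∩ B) (A \ B)) ∪ (EIf G (A \ B))).card :=
        Finset.card_le_card hsub
    _ ≤ ((EIf G (A ∩ B)) ∪ (EBf G (A ∩ B) (A \ B))).card + (EIf G (A \ B)).card :=
        Finset.card_union_le _ _
    _ ≤ (EIf G (A ∩ B)).card + (EBf G (A ∩ B) (A \ B)).card + (EIf G (A \ B)).card :=
        Nat.add_le_add_right (Finset.card_union_le _ _) _

private lemma L11 (G : SimpleGraph (Fin n)) (A B : Finset (Fin n)) :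
    (EBf G A Aᶜ).card ≤ (EBf G A B).card + (EBf G A ((A ∪ B)ᶜ)).card := by
  have hsub : EBf G A Aᶜ ⊆ (EBf G A B) ∪ (EBf G A ((A ∪ B)ᶜ)) := by
    intro e he
    rw [mem_EBf] at he
    obtain ⟨hedge, u, v, rfl, hu, hv⟩ := he
    rw [Finset.mem_compl] at hv
    rw [Finset.mem_union]
    by_cases hvb : v ∈ B
    · exact Or.inl (mem_EBf.mpr ⟨hedge, u, v, rfl, hu, hvb⟩)
    · refine Or.inr (mem_EBf.mpr ⟨hedge, u, v, rfl, hu, ?_⟩)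
      rw [Finset.mem_compl, Finset.mem_union]
      tauto
  exact le_trans (Finset.card_le_card hsub) (Finset.card_union_le _ _)

end Aux


/-- For every `α ∈ (0,1)` there are `ε > 0` and `n₀` such that for all
`n ≥ n₀`: if `G` is a non-`α`-extremal graph on `n` vertices of minimum degree at least
`(1/2 - ε)n`, then `e(A, B) ≥ (α/3)n²` for every pair of half-sets `A`, `B`. -/
theorem edges_between_halfsets :
    ∀ α : ℝ, 0 < α → α < 1 → ∃ ε : ℝ, 0 < ε ∧ ∃ n₀ : ℕ, ∀ n : ℕ, n₀ ≤ n →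
      ∀ G : SimpleGraph (Fin n),
        ¬ GraphExtremal α G →
        (∀ v, (1 / 2 - ε) * (n : ℝ) ≤ ((G.neighborSet v).ncard : ℝ)) →
        ∀ A B : Finset (Fin n), IsHalfSet A → IsHalfSet B →
          α / 3 * (n : ℝ) ^ 2 ≤ ((eBetween G ↑A ↑B : ℕ) : ℝ) := by
  intro α hα0 hα1
  refine ⟨α/200, by positivity, ⌈(2000:ℝ)/α⌉₊, ?_⟩
  intro n hn G hne hdeg A B hA hB
  have hnR : (2000:ℝ)/α ≤ (n:ℝ) := le_trans (Nat.le_ceil _) (Nat.cast_le.mpr hn)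
  have hn2000 : (2000:ℝ) ≤ α * n := by
    rw [div_le_iff₀ hα0] at hnR; linarith
  have hN : (0:ℝ) < (n:ℝ) := lt_of_lt_of_le (div_pos (by norm_num) hα0) hnR
  have hn1 : (2000:ℝ) ≤ (n:ℝ) := by
    nlinarith [mul_nonneg (by linarith : (0:ℝ) ≤ 1 - α) hN.le]
  have hNE : ∀ C : Finset (Fin n), IsHalfSet C →
      α * (n:ℝ)^2 < ((eIn G ↑C : ℕ) : ℝ) ∧
        α * (n:ℝ)^2 < ((eBetween G ↑C (↑C : Set (Fin n))ᶜ : ℕ) : ℝ) := by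
    intro C hC
    by_contra hcon
    apply hne
    refine ⟨C, hC, ?_⟩
    rw [Nat.cast_min]
    rw [not_and_or, not_lt, not_lt] at hcon
    rcases hcon with h | h
    · exact le_trans (min_le_left _ _) h
    · exact le_trans (min_le_right _ _) h
  by_contra hgoal
  push_neg at hgoal
  obtain ⟨hInA, hCrA⟩ := hNE A hA
  rw [eIn_eq_card] at hInA
  rw [show ((↑A : Set (Fin n)))ᶜ = ((Aᶜ : Finset (Fin n)) : Set (Fin n)) from
    (Finset.coe_compl A).symm, eBetween_eq_card] at hCrA
  rw [eBetween_eq_card] at hgoal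
  -- basic cardinality facts
  have hxp : ((A ∩ B).card : ℝ) + ((A \ B).card : ℝ) = (A.card : ℝ) := by
    exact_mod_cast Finset.card_inter_add_card_sdiff A B
  have hUn : ((A ∪ B).card : ℝ) + ((A ∩ B).card : ℝ) = (A.card : ℝ) + (B.card : ℝ) := by
    exact_mod_cast Finset.card_union_add_card_inter A B
  have hABn : (A ∪ B).card ≤ n := by
    simpa using Finset.card_le_univ (A ∪ B)
  have hRc : (((A ∪ B)ᶜ).card : ℝ) = (n:ℝ) - ((A ∪ B).card : ℝ) := by
    rw [Finset.card_compl, Fintype.card_fin, Nat.cast_sub hABn]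
  have hxn : ((A ∩ B).card : ℝ) ≤ (n:ℝ) := by
    exact_mod_cast le_trans (Finset.card_le_univ (A ∩ B)) (by simp)
  have hrx : (((A ∪ B)ᶜ).card : ℝ) ≤ ((A ∩ B).card : ℝ) + 1 := by
    have h1 := hA.1
    have h2 := hB.1
    linarith [hRc, hUn]
  rcases le_or_gt (1/6 : ℝ) α with hbig | hsmall
  · -- vacuity: α ≥ 1/6 makes non-extremality impossible
    have h2EI : 2*((EIf G A).card : ℝ) + (A.card:ℝ) ≤ (A.card:ℝ)*(A.card:ℝ) := by
      exact_mod_cast two_EIf_le G A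
    have hha1 : ((n:ℝ)-1)/2 ≤ (A.card:ℝ) := hA.1
    have hha2 : (A.card:ℝ) ≤ ((n:ℝ)+1)/2 := hA.2
    have hmul : (0:ℝ) ≤ (((n:ℝ)+1)/2 - (A.card:ℝ)) * ((A.card:ℝ) + ((n:ℝ)+1)/2 - 1) := by
      apply mul_nonneg <;> linarith
    have p3 : (1/6)*(n:ℝ)^2 ≤ α*(n:ℝ)^2 := mul_le_mul_of_nonneg_right hbig (sq_nonneg _)
    linarith [hInA, h2EI, hmul, p3, sq_nonneg (n:ℝ)]
  · -- main case : α < 1/6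
    set m := ((EBf G A B).card : ℝ) with hm
    have hm0 : (0:ℝ) ≤ m := Nat.cast_nonneg _
    have hM : m ≤ α/3*(n:ℝ)^2 := le_of_lt hgoal
    set S := α*(n:ℝ)^2 - m with hS
    have hS0 : (0:ℝ) ≤ 2*S := by
      have : (0:ℝ) ≤ α*(n:ℝ)^2 := mul_nonneg hα0.le (sq_nonneg _)
      linarith
    set Rn := Real.sqrt (2*S) with hRn
    have hRn0 : (0:ℝ) ≤ Rn := Real.sqrt_nonneg _
    have hRnsq : Rn^2 = 2*S := Real.sq_sqrt hS0
    -- edge-count inequalities (cast to ℝ)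
    have hL9 : ((EIf G (A ∩ B)).card : ℝ) + ((EBf G (A ∩ B) (A \ B)).card : ℝ)
        + ((EBf G (A ∩ B) (B \ A)).card : ℝ) ≤ m := by
      rw [hm]; exact_mod_cast L9 G A B
    have hL10 : ((EIf G A).card : ℝ) ≤ ((EIf G (A ∩ B)).card : ℝ)
        + ((EBf G (A ∩ B) (A \ B)).card : ℝ) + ((EIf G (A \ B)).card : ℝ) := by
      exact_mod_cast L10 G A B
    have hL11 : ((EBf G A Aᶜ).card : ℝ) ≤ m + ((EBf G A ((A ∪ B)ᶜ)).card : ℝ) := by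
      rw [hm]; exact_mod_cast L11 G A B
    have hEBARf : ((EBf G A ((A ∪ B)ᶜ)).card : ℝ) ≤ (A.card:ℝ) * (((A ∪ B)ᶜ).card : ℝ) := by
      exact_mod_cast EBf_card_le G A ((A ∪ B)ᶜ)
    -- P is large
    have heP : S ≤ ((EIf G (A \ B)).card : ℝ) := by
      have hEB0 : (0:ℝ) ≤ ((EBf G (A ∩ B) (B \ A)).card : ℝ) := Nat.cast_nonneg _
      linarith
    have h2EIP : 2*((EIf G (A \ B)).card : ℝ) + ((A \ B).card:ℝ)
        ≤ ((A \ B).card:ℝ)*((A \ B).card:ℝ) := by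
      exact_mod_cast two_EIf_le G (A \ B)
    have hpcR : Rn ≤ ((A \ B).card : ℝ) := by
      have h2S : 2*S ≤ ((A \ B).card:ℝ)^2 := by
        have h0 : (0:ℝ) ≤ ((A \ B).card:ℝ) := Nat.cast_nonneg _
        linarith [heP, h2EIP, h0]
      calc Rn = Real.sqrt (2*S) := hRn
        _ ≤ Real.sqrt (((A \ B).card:ℝ)^2) := Real.sqrt_le_sqrt h2S
        _ = ((A \ B).card:ℝ) := Real.sqrt_sq (Nat.cast_nonneg _)
    have h2' : ((A ∩ B).card:ℝ) ≤ (n:ℝ)/2 - Rn + (α/50)*(n:ℝ) := by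
      linarith [hA.2, hxp, hpcR, hn2000]
    -- R is large
    have h1' : 2*S ≤ ((A ∩ B).card:ℝ)*(n:ℝ) + (α/50)*(n:ℝ)^2 := by
      have hrc0 : (0:ℝ) ≤ (((A ∪ B)ᶜ).card:ℝ) := Nat.cast_nonneg _
      have hha2 : (A.card:ℝ) ≤ ((n:ℝ)+1)/2 := hA.2
      have hx0 : (0:ℝ) ≤ ((A ∩ B).card:ℝ) := Nat.cast_nonneg _
      have p1 : (A.card:ℝ)*(((A ∪ B)ᶜ).card:ℝ) ≤ (((n:ℝ)+1)/2)*(((A ∩ B).card:ℝ) + 1) :=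
        mul_le_mul hha2 hrx hrc0 (by linarith)
      have p2 : 2000*(n:ℝ) ≤ α*(n:ℝ)*(n:ℝ) := mul_le_mul_of_nonneg_right hn2000 hN.le
      linarith [hCrA, hL11, hEBARf, p1, p2, hxn, hn1]
    -- degree count over X = A ∩ B
    have hdegX : ((A ∩ B).card:ℝ) * ((1/2 - α/200)*(n:ℝ))
        ≤ ((PFf G (A ∩ B) Finset.univ).card : ℝ) := by
      have h1 : ∀ v ∈ (A ∩ B), (1/2 - α/200)*(n:ℝ) ≤ ((G.neighborSet v).ncard : ℝ) :=
        fun v _ => hdeg v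
      calc ((A ∩ B).card:ℝ) * ((1/2 - α/200)*(n:ℝ))
          ≤ ∑ v ∈ (A ∩ B), ((G.neighborSet v).ncard:ℝ) := by
            have h2 := Finset.card_nsmul_le_sum (A ∩ B)
              (fun v => ((G.neighborSet v).ncard:ℝ)) _ h1
            rwa [nsmul_eq_mul] at h2
        _ = (((∑ v ∈ (A ∩ B), (G.neighborSet v).ncard) : ℕ) : ℝ) := by push_cast; rfl
        _ = ((PFf G (A ∩ B) Finset.univ).card : ℝ) := by rw [sum_deg_eq]
    -- decompose the pair count
    have hPFdec : ((PFf G (A ∩ B) Finset.univ).card : ℝ)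
        ≤ ((PFf G (A ∩ B) (A ∩ B)).card : ℝ) + ((PFf G (A ∩ B) (A \ B)).card : ℝ)
          + ((PFf G (A ∩ B) (B \ A)).card : ℝ) + ((PFf G (A ∩ B) ((A ∪ B)ᶜ)).card : ℝ) := by
      have hsubPF : PFf G (A ∩ B) Finset.univ
          ⊆ ((PFf G (A ∩ B) (A ∩ B) ∪ PFf G (A ∩ B) (A \ B)) ∪ PFf G (A ∩ B) (B \ A))
            ∪ PFf G (A ∩ B) ((A ∪ B)ᶜ) := by
        intro p hp
        rw [mem_PFf] at hp
        obtain ⟨hp1, -, hp3⟩ := hp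
        simp only [Finset.mem_union]
        by_cases h1 : p.2 ∈ A <;> by_cases h2 : p.2 ∈ B
        · exact Or.inl (Or.inl (Or.inl (mem_PFf.mpr ⟨hp1, Finset.mem_inter.mpr ⟨h1, h2⟩, hp3⟩)))
        · exact Or.inl (Or.inl (Or.inr (mem_PFf.mpr ⟨hp1, Finset.mem_sdiff.mpr ⟨h1, h2⟩, hp3⟩)))
        · exact Or.inl (Or.inr (mem_PFf.mpr ⟨hp1, Finset.mem_sdiff.mpr ⟨h2, h1⟩, hp3⟩))
        · refine Or.inr (mem_PFf.mpr ⟨hp1, Finset.mem_compl.mpr ?_, hp3⟩)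
          rw [Finset.mem_union]
          rintro (h | h)
          · exact h1 h
          · exact h2 h
      have hcard := Finset.card_le_card hsubPF
      have hc1 := Finset.card_union_le
        ((PFf G (A ∩ B) (A ∩ B) ∪ PFf G (A ∩ B) (A \ B)) ∪ PFf G (A ∩ B) (B \ A))
        (PFf G (A ∩ B) ((A ∪ B)ᶜ))
      have hc2 := Finset.card_union_le
        (PFf G (A ∩ B) (A ∩ B) ∪ PFf G (A ∩ B) (A \ B)) (PFf G (A ∩ B) (B \ A))
      have hc3 := Finset.card_union_le (PFf G (A ∩ B) (A ∩ B)) (PFf G (A ∩ B) (A \ B))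
      have : (PFf G (A ∩ B) Finset.univ).card
          ≤ (PFf G (A ∩ B) (A ∩ B)).card + (PFf G (A ∩ B) (A \ B)).card
            + (PFf G (A ∩ B) (B \ A)).card + (PFf G (A ∩ B) ((A ∪ B)ᶜ)).card := by omega
      exact_mod_cast this
    -- bound the pieces
    have hdXP : Disjoint (A ∩ B) (A \ B) := by
      rw [Finset.disjoint_left]
      intro a ha1 ha2
      rw [Finset.mem_inter] at ha1
      rw [Finset.mem_sdiff] at ha2
      exact ha2.2 ha1.2
    have hdXQ : Disjoint (A ∩ B) (B \ A) := by
      rw [Finset.disjoint_left]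
      intro a ha1 ha2
      rw [Finset.mem_inter] at ha1
      rw [Finset.mem_sdiff] at ha2
      exact ha2.2 ha1.1
    have hPFXX : ((PFf G (A ∩ B) (A ∩ B)).card : ℝ) ≤ 2*((EIf G (A ∩ B)).card : ℝ) := by
      exact_mod_cast PFf_le_two_EIf G (A ∩ B)
    have hPFXP : ((PFf G (A ∩ B) (A \ B)).card : ℝ) ≤ ((EBf G (A ∩ B) (A \ B)).card : ℝ) := by
      exact_mod_cast PFf_le_EBf G hdXP
    have hPFXQ : ((PFf G (A ∩ B) (B \ A)).card : ℝ) ≤ ((EBf G (A ∩ B) (B \ A)).card : ℝ) := by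
      exact_mod_cast PFf_le_EBf G hdXQ
    have hPFXR : ((PFf G (A ∩ B) ((A ∪ B)ᶜ)).card : ℝ)
        ≤ ((A ∩ B).card:ℝ) * (((A ∪ B)ᶜ).card:ℝ) := by
      exact_mod_cast PFf_card_le G (A ∩ B) ((A ∪ B)ᶜ)
    have h2EIX : 2*((EIf G (A ∩ B)).card : ℝ) + ((A ∩ B).card:ℝ)
        ≤ ((A ∩ B).card:ℝ)*((A ∩ B).card:ℝ) := by
      exact_mod_cast two_EIf_le G (A ∩ B)
    have hEIXm : ((EIf G (A ∩ B)).card : ℝ) ≤ m := by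
      have hc1 : (0:ℝ) ≤ ((EBf G (A ∩ B) (A \ B)).card : ℝ) := Nat.cast_nonneg _
      have hc2 : (0:ℝ) ≤ ((EBf G (A ∩ B) (B \ A)).card : ℝ) := Nat.cast_nonneg _
      linarith
    have hx0 : (0:ℝ) ≤ ((A ∩ B).card:ℝ) := Nat.cast_nonneg _
    -- master degree inequality
    have hmaster : ((A ∩ B).card:ℝ) * ((1/2 - α/200)*(n:ℝ))
        ≤ ((EIf G (A ∩ B)).card : ℝ) + m
          + ((A ∩ B).card:ℝ) * (((A ∩ B).card:ℝ) + 1) := by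
      have hXRc : ((A ∩ B).card:ℝ) * (((A ∪ B)ᶜ).card:ℝ)
          ≤ ((A ∩ B).card:ℝ) * (((A ∩ B).card:ℝ) + 1) :=
        mul_le_mul_of_nonneg_left hrx hx0
      linarith
    have q1 : ((A ∩ B).card:ℝ)*((α/200)*(n:ℝ)) ≤ (n:ℝ)*((α/200)*(n:ℝ)) :=
      mul_le_mul_of_nonneg_right hxn (by positivity)
    have p2 : 2000*(n:ℝ) ≤ α*(n:ℝ)*(n:ℝ) := mul_le_mul_of_nonneg_right hn2000 hN.le
    have h3' : ((A ∩ B).card:ℝ)*((n:ℝ)/2 - ((A ∩ B).card:ℝ)) ≤ 2*m + (α/50)*(n:ℝ)^2 := by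
      linarith [hmaster, hEIXm, q1, p2, hxn, hN.le]
    have h4' : ((A ∩ B).card:ℝ)*((n:ℝ)/2 - (3/2)*((A ∩ B).card:ℝ)) ≤ m + (α/50)*(n:ℝ)^2 := by
      linarith [hmaster, h2EIX, q1, p2, hxn, hN.le]
    exact endgame' hN hα0 (le_of_lt hsmall) hm0 hM hx0 hS hRn0 hRnsq h1' h2' h3' h4'


end RobustDirac
end

section
/- For every α ∈ (0,1) there is an n₀ such that for all n ≥ n₀ the following holds. Let G be an edge-minimal Dirac graph on n vertices and let A be a half-set of its vertex set with e_G(A) ≤ αn². Then e_G(Ā) ≤ 3αn², where Ā denotes the complement of A. -/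
open Finset
open scoped Classical

namespace RobustDirac

/-- An edge-minimal Dirac graph: removing any edge destroys the Dirac property. -/
def IsEdgeMinimalDirac {n : ℕ} (G : SimpleGraph (Fin n)) : Prop :=
  IsDirac G ∧ ∀ e ∈ G.edgeSet, ¬ IsDirac (G.deleteEdges {e})


section Helpers
variable {n : ℕ} (G : SimpleGraph (Fin n))

lemma sum_filter_adj_comm (P Q : Finset (Fin n)) :
    ∑ x ∈ P, (Q.filter (fun y => G.Adj x y)).card
      = ∑ y ∈ Q, (P.filter (fun x => G.Adj y x)).card := by
  simp_rw [Finset.card_filter]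
  rw [Finset.sum_comm]
  refine Finset.sum_congr rfl fun y _ => Finset.sum_congr rfl fun x _ => ?_
  exact if_congr (G.adj_comm x y) rfl rfl

lemma degree_split (A : Finset (Fin n)) (v : Fin n) :
    G.degree v = (A.filter (fun u => G.Adj v u)).card
      + (Aᶜ.filter (fun u => G.Adj v u)).card := by
  have h : G.degree v = (univ.filter (fun u => G.Adj v u)).card := by
    rw [← SimpleGraph.neighborFinset_eq_filter]; rfl
  rw [h, ← Finset.card_union_of_disjoint
    (Finset.disjoint_filter_filter disjoint_compl_right),
    ← Finset.filter_union, Finset.union_compl]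

lemma ncard_nbr (v : Fin n) : (G.neighborSet v).ncard = G.degree v := by
  rw [Set.ncard_eq_toFinset_card', ← SimpleGraph.neighborFinset_def]; rfl

lemma deg_drop {G : SimpleGraph (Fin n)} {u v : Fin n} (huv : G.Adj u v)
    (hw : ((((G.deleteEdges {s(u, v)}).neighborSet u).ncard : ℝ)) < n / 2) :
    (G.degree u : ℝ) < n / 2 + 1 := by
  have hset : (G.deleteEdges {s(u, v)}).neighborSet u = G.neighborSet u \ {v} := by
    ext y
    simp only [SimpleGraph.mem_neighborSet, SimpleGraph.deleteEdges_adj,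
      Set.mem_singleton_iff, Set.mem_diff, Sym2.eq_iff]
    have hne := G.ne_of_adj huv
    constructor
    · rintro ⟨ha, h2⟩
      exact ⟨ha, fun hyv => h2 (by tauto)⟩
    · rintro ⟨ha, h2⟩
      exact ⟨ha, by tauto⟩
  rw [hset] at hw
  have hvmem : v ∈ G.neighborSet u := huv
  have hfin : (G.neighborSet u).Finite := Set.toFinite _
  rw [Set.ncard_diff_singleton_of_mem hvmem] at hw
  have hge1 : 0 < (G.neighborSet u).ncard := (Set.ncard_pos hfin).mpr ⟨v, hvmem⟩
  rw [Nat.cast_sub hge1, ncard_nbr] at hw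
  linarith

lemma edge_small_endpoint {G : SimpleGraph (Fin n)}
    (hmin : ∀ e ∈ G.edgeSet,
      ¬ (∀ v, (n : ℝ) / 2 ≤ (((G.deleteEdges {e}).neighborSet v).ncard : ℝ)))
    (hdir : ∀ v, (n : ℝ) / 2 ≤ ((G.neighborSet v).ncard : ℝ))
    {u v : Fin n} (huv : G.Adj u v) :
    (G.degree u : ℝ) < n / 2 + 1 ∨ (G.degree v : ℝ) < n / 2 + 1 := by
  have he : s(u, v) ∈ G.edgeSet := huv
  have h := hmin _ he
  push_neg at h
  obtain ⟨w, hw⟩ := h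
  by_cases hwu : w = u
  · subst hwu; exact Or.inl (deg_drop huv hw)
  by_cases hwv : w = v
  · subst hwv
    refine Or.inr (deg_drop huv.symm ?_)
    rwa [Sym2.eq_swap] at hw
  exfalso
  have hset : (G.deleteEdges {s(u, v)}).neighborSet w = G.neighborSet w := by
    ext y
    simp only [SimpleGraph.mem_neighborSet, SimpleGraph.deleteEdges_adj,
      Set.mem_singleton_iff, Sym2.eq_iff]
    constructor
    · exact fun h => h.1
    · exact fun h => ⟨h, by tauto⟩
  rw [hset] at hw
  exact absurd (hdir w) (not_le.mpr hw)

def within (A : Finset (Fin n)) : SimpleGraph (Fin n) where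
  Adj u v := G.Adj u v ∧ u ∈ A ∧ v ∈ A
  symm := ⟨fun _ _ h => ⟨h.1.symm, h.2.2, h.2.1⟩⟩
  loopless := ⟨fun v h => G.loopless.irrefl v h.1⟩

lemma within_edgeSet (A : Finset (Fin n)) :
    (within G A).edgeSet = {e ∈ G.edgeSet | ∀ v ∈ e, v ∈ (↑A : Set (Fin n))} := by
  ext e
  induction e using Sym2.ind with
  | _ u v =>
    simp only [SimpleGraph.mem_edgeSet, Set.mem_setOf_eq, Sym2.mem_iff, within]
    constructor
    · rintro ⟨h, hu, hv⟩
      exact ⟨h, fun w hw => by rcases hw with rfl | rfl <;> simpa⟩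
    · rintro ⟨h, hall⟩
      exact ⟨h, by simpa using hall u (Or.inl rfl), by simpa using hall v (Or.inr rfl)⟩

lemma eIn_eq_card_s17 (A : Finset (Fin n)) :
    eIn G ↑A = (within G A).edgeFinset.card := by
  rw [eIn, ← within_edgeSet, Set.ncard_eq_toFinset_card']
  congr 1

lemma within_degree (A : Finset (Fin n)) (v : Fin n) :
    (within G A).degree v = if v ∈ A then (A.filter (fun u => G.Adj v u)).card else 0 := by
  show ((within G A).neighborFinset v).card = _
  rw [SimpleGraph.neighborFinset_eq_filter]
  split_ifs with h
  · congr 1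
    ext u
    simp only [mem_filter, mem_univ, true_and, within, h, and_true]
    tauto
  · rw [Finset.card_eq_zero, Finset.filter_eq_empty_iff]
    intro u _
    exact fun hadj => h hadj.2.1

lemma two_mul_eIn (A : Finset (Fin n)) :
    2 * eIn G ↑A = ∑ v ∈ A, (A.filter (fun u => G.Adj v u)).card := by
  rw [eIn_eq_card_s17, ← SimpleGraph.sum_degrees_eq_twice_card_edges]
  simp only [within_degree]
  rw [Finset.sum_ite_mem, Finset.univ_inter]

end Helpers

/-- For every `α ∈ (0,1)` there is `n₀` such that for all `n ≥ n₀`: if `G`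
is an edge-minimal Dirac graph on `n` vertices and `A` a half-set with `e(A) ≤ αn²`, then
`e(Ā) ≤ 3αn²`. -/

theorem complement_also_sparse :
    ∀ α : ℝ, 0 < α → α < 1 → ∃ n₀ : ℕ, ∀ n : ℕ, n₀ ≤ n →
      ∀ G : SimpleGraph (Fin n), IsEdgeMinimalDirac G →
        ∀ A : Finset (Fin n), IsHalfSet A →
          ((eIn G ↑A : ℕ) : ℝ) ≤ α * (n : ℝ) ^ 2 →
          ((eIn G (↑A)ᶜ : ℕ) : ℝ) ≤ 3 * α * (n : ℝ) ^ 2 := by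
  intro α hα0 hα1
  obtain ⟨m, hm⟩ := exists_nat_ge (2 / α)
  refine ⟨m + 1, fun n hn G hG A hA hAe => ?_⟩
  obtain ⟨hdir, hmin⟩ := hG
  -- basic numeric facts
  have hn1 : (1 : ℝ) ≤ n := by
    have : 1 ≤ n := le_trans (Nat.le_add_left 1 m) hn
    exact_mod_cast this
  have hnm : (2 / α : ℝ) ≤ n := le_trans hm (by exact_mod_cast le_trans (Nat.le_succ m) hn)
  have hαn2 : (n : ℝ) + 1 ≤ α * (n : ℝ) ^ 2 := by
    have h2 : 2 ≤ α * n := by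
      rw [div_le_iff₀ hα0] at hnm
      linarith [hnm]
    nlinarith
  -- notation
  set B : Finset (Fin n) := Aᶜ with hB
  set dA : Fin n → ℕ := fun v => (A.filter (fun u => G.Adj v u)).card with hdA
  set dB : Fin n → ℕ := fun v => (B.filter (fun u => G.Adj v u)).card with hdB
  set s : ℝ := (A.card : ℝ) with hs
  set t : ℝ := (B.card : ℝ) with ht
  have hst : t = n - s := by
    rw [ht, hs, hB, Finset.card_compl, Nat.cast_sub (Finset.card_le_univ A), Fintype.card_fin]
  have hAlb : ((n : ℝ) - 1) / 2 ≤ s := hA.1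
  have hAub : s ≤ ((n : ℝ) + 1) / 2 := hA.2
  have htub : t ≤ ((n : ℝ) + 1) / 2 := by rw [hst]; linarith
  -- degree facts
  have hdeg : ∀ v, (G.degree v : ℝ) = (dA v : ℝ) + (dB v : ℝ) := by
    intro v
    have := degree_split G A v
    rw [hdA, hdB, hB]
    exact_mod_cast this
  have hdir' : ∀ v, (n : ℝ) / 2 ≤ (G.degree v : ℝ) := by
    intro v
    have := hdir v
    rwa [ncard_nbr] at this
  -- Step: sum over A of dA is ≤ 2αn²
  have h3 : (2 : ℝ) * (eIn G ↑A : ℕ) = ∑ v ∈ A, (dA v : ℝ) := by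
    have h := two_mul_eIn G A
    show (2 : ℝ) * (eIn G ↑A : ℕ) = ∑ v ∈ A, ((A.filter (fun u => G.Adj v u)).card : ℝ)
    exact_mod_cast h
  have hsumdA : (∑ v ∈ A, (dA v : ℝ)) ≤ 2 * (α * n ^ 2) := by
    rw [← h3]; linarith
  -- Step: sum over A of dB lower bound
  have hsumdB : s * ((n : ℝ) / 2) - 2 * (α * n ^ 2) ≤ ∑ v ∈ A, (dB v : ℝ) := by
    have h1 : ∑ v ∈ A, ((n : ℝ) / 2) ≤ ∑ v ∈ A, ((dA v : ℝ) + (dB v : ℝ)) :=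
      Finset.sum_le_sum fun v _ => by rw [← hdeg v]; exact hdir' v
    rw [Finset.sum_const, Finset.sum_add_distrib] at h1
    simp only [nsmul_eq_mul] at h1
    rw [← hs] at h1
    linarith
  -- Step: nonedge count N bound
  have hswap : (∑ x ∈ B, (dA x : ℝ)) = ∑ v ∈ A, (dB v : ℝ) := by
    have := sum_filter_adj_comm G B A
    rw [hdA, hdB]
    exact_mod_cast this
  have hN : (∑ x ∈ B, (s - (dA x : ℝ))) ≤ 2 * (α * n ^ 2) + ((n : ℝ) + 1) / 4 := by
    rw [Finset.sum_sub_distrib, Finset.sum_const, nsmul_eq_mul, ← ht, hswap]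
    have key : s * t - s * ((n : ℝ) / 2) ≤ ((n : ℝ) + 1) / 4 := by
      rw [hst]
      nlinarith [hAlb, hAub, hn1]
    linarith
  have hNnonneg : ∀ x ∈ B, (0 : ℝ) ≤ s - (dA x : ℝ) := by
    intro x _
    have : dA x ≤ A.card := Finset.card_filter_le _ _
    rw [hs]
    have : (dA x : ℝ) ≤ (A.card : ℝ) := by exact_mod_cast this
    linarith
  -- small vertices
  set S : Finset (Fin n) := B.filter (fun x => (G.degree x : ℝ) < (n : ℝ) / 2 + 1) with hSdef
  have hSsub : S ⊆ B := by rw [hSdef]; exact Finset.filter_subset _ _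
  have hLL : ∀ x ∈ B \ S, ∀ y ∈ B \ S, ¬ G.Adj x y := by
    intro x hx y hy hadj
    rw [Finset.mem_sdiff, hSdef, Finset.mem_filter] at hx hy
    rcases edge_small_endpoint hmin hdir hadj with h | h
    · exact hx.2 ⟨hx.1, h⟩
    · exact hy.2 ⟨hy.1, h⟩
  -- Step 6: sum over B of dB ≤ 2 * sum over S of dB (in ℕ)
  have hstep6 : ∑ x ∈ B, dB x ≤ 2 * ∑ x ∈ S, dB x := by
    have hsplit : ∑ x ∈ B, dB x = ∑ x ∈ S, dB x + ∑ x ∈ B \ S, dB x := by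
      rw [← Finset.sum_sdiff hSsub]
      ring
    have hrest : ∑ x ∈ B \ S, dB x ≤ ∑ y ∈ S, dB y := by
      have h1 : ∀ x ∈ B \ S, dB x ≤ (S.filter (fun y => G.Adj x y)).card := by
        intro x hx
        apply Finset.card_le_card
        intro y hy
        rw [Finset.mem_filter] at hy ⊢
        refine ⟨?_, hy.2⟩
        by_contra hyS
        exact hLL x hx y (Finset.mem_sdiff.mpr ⟨hy.1, hyS⟩) hy.2
      calc ∑ x ∈ B \ S, dB x ≤ ∑ x ∈ B \ S, (S.filter (fun y => G.Adj x y)).card :=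
            Finset.sum_le_sum h1
        _ = ∑ y ∈ S, ((B \ S).filter (fun x => G.Adj y x)).card :=
            sum_filter_adj_comm G (B \ S) S
        _ ≤ ∑ y ∈ S, dB y := by
            refine Finset.sum_le_sum fun y _ => Finset.card_le_card ?_
            exact Finset.filter_subset_filter _ (Finset.sdiff_subset)
    omega
  -- Step 7: bound sum over S of dB in ℝ
  have hstep7 : (∑ x ∈ S, (dB x : ℝ)) ≤ (3 / 2) * t + (2 * (α * n ^ 2) + ((n : ℝ) + 1) / 4) := by
    have h1 : ∀ x ∈ S, (dB x : ℝ) ≤ 3 / 2 + (s - (dA x : ℝ)) := by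
      intro x hx
      rw [hSdef, Finset.mem_filter] at hx
      have hdx := hx.2
      rw [hdeg x] at hdx
      linarith [hAlb]
    calc (∑ x ∈ S, (dB x : ℝ)) ≤ ∑ x ∈ S, (3 / 2 + (s - (dA x : ℝ))) :=
          Finset.sum_le_sum h1
      _ = (3 / 2) * S.card + ∑ x ∈ S, (s - (dA x : ℝ)) := by
          rw [Finset.sum_add_distrib, Finset.sum_const, nsmul_eq_mul]; ring
      _ ≤ (3 / 2) * t + ∑ x ∈ B, (s - (dA x : ℝ)) := by
          have hcard : (S.card : ℝ) ≤ t := by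
            rw [ht]
            exact_mod_cast Finset.card_le_card hSsub
          have hsum : (∑ x ∈ S, (s - (dA x : ℝ))) ≤ ∑ x ∈ B, (s - (dA x : ℝ)) :=
            Finset.sum_le_sum_of_subset_of_nonneg hSsub (fun x hx _ => hNnonneg x hx)
          linarith
      _ ≤ (3 / 2) * t + (2 * (α * n ^ 2) + ((n : ℝ) + 1) / 4) := by linarith
  -- final assembly
  have h4 : (2 : ℝ) * (eIn G (↑A)ᶜ : ℕ) = ∑ v ∈ B, (dB v : ℝ) := by
    have hc : ((↑A)ᶜ : Set (Fin n)) = (↑B : Set (Fin n)) := by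
      rw [hB, Finset.coe_compl]
    rw [hc]
    have h := two_mul_eIn G B
    show (2 : ℝ) * (eIn G ↑B : ℕ) = ∑ v ∈ B, ((B.filter (fun u => G.Adj v u)).card : ℝ)
    exact_mod_cast h
  have hsum6 : (∑ x ∈ B, (dB x : ℝ)) ≤ 2 * ∑ x ∈ S, (dB x : ℝ) := by
    have := hstep6
    push_cast
    exact_mod_cast this
  have : (2 : ℝ) * (eIn G (↑A)ᶜ : ℕ) ≤ 2 * ((3 / 2) * t + (2 * (α * n ^ 2) + ((n : ℝ) + 1) / 4)) := by
    rw [h4]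
    linarith
  linarith [htub, hαn2, this]



end RobustDirac
end
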